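/- With U_j = ⋃_{i : j ∈ σ_i} S_i, for every nonempty σ ⊆ {1, ..., n}: the set (⋂_{j ∈ σ} U_j) \ (⋃_{l ∉ σ} U_l) is nonempty if and only if σ = σ_i for some i ∈ {1, ..., k}. -/
import Mathlib


open Set

/-- The points {0, e_1, ..., e_t} in ℝ^d, where e_j = Pi.single (j-1) 1. -/
noncomputable def basisPts (d t : ℕ) : Set (Fin d → ℝ) :=
  insert 0 {x | ∃ m : Fin d, (m : ℕ) < t ∧ x = Pi.single m 1}

/-- F d t = conv{0, e_1, ..., e_t}. -/
noncomputable def F (d t : ℕ) : Set (Fin d → ℝ) := convexHull ℝ (basisPts d t)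

/-- S d i = conv{0, e_1, ..., e_{i-1}} \ conv{0, e_1, ..., e_{i-2}}, with S d 1 = {0}. -/
noncomputable def S (d i : ℕ) : Set (Fin d → ℝ) :=
  F d (i - 1) \ (if i ≤ 1 then ∅ else F d (i - 2))

lemma F_mono {d t t' : ℕ} (h : t ≤ t') : F d t ⊆ F d t' := by
  apply convexHull_mono
  rintro x (rfl | ⟨m, hm, rfl⟩)
  · exact Set.mem_insert _ _
  · exact Set.mem_insert_iff.mpr (Or.inr ⟨m, lt_of_lt_of_le hm h, rfl⟩)

lemma F_coord_zero {d t : ℕ} (m : Fin d) (hm : t ≤ (m : ℕ)) {x : Fin d → ℝ}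
    (hx : x ∈ F d t) : x m = 0 := by
  have hsub : F d t ⊆ {y : Fin d → ℝ | y m = 0} := by
    apply convexHull_min
    · rintro y (rfl | ⟨m', hm', rfl⟩)
      · rfl
      · have hne : m ≠ m' := by
          intro h; subst h; omega
        exact Pi.single_eq_of_ne hne 1
    · intro a ha b hb p q hp hq hpq
      simp only [Set.mem_setOf_eq] at *
      simp [ha, hb]
  exact hsub hx

lemma zero_mem_F {d t : ℕ} : (0 : Fin d → ℝ) ∈ F d t :=
  subset_convexHull ℝ _ (Set.mem_insert _ _)

lemma S_nonempty {d i : ℕ} (h1 : 1 ≤ i) (h2 : i ≤ d + 1) : (S d i).Nonempty := by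
  rcases eq_or_lt_of_le h1 with h | h
  · refine ⟨0, zero_mem_F, ?_⟩
    rw [← h]
    simp
  · -- i ≥ 2
    have hd : i - 2 < d := by omega
    set m : Fin d := ⟨i - 2, hd⟩
    refine ⟨Pi.single m 1, ?_, ?_⟩
    · exact subset_convexHull ℝ _ (Set.mem_insert_iff.mpr
        (Or.inr ⟨m, by simp [m]; omega, rfl⟩))
    · rw [if_neg (by omega)]
      intro hmem
      have := F_coord_zero m (le_refl _) hmem
      simp [m] at this
      -- need (i-2 : ℕ) coercion: F_coord_zero with t = i - 2, m = i - 2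
  
lemma S_disjoint_lt {d a b : ℕ} (ha : 1 ≤ a) (hab : a < b) {x : Fin d → ℝ}
    (hxa : x ∈ S d a) (hxb : x ∈ S d b) : False := by
  obtain ⟨hxa1, _⟩ := hxa
  obtain ⟨_, hxb2⟩ := hxb
  rw [if_neg (by omega)] at hxb2
  exact hxb2 (F_mono (by omega) hxa1)

lemma S_disjoint {d a b : ℕ} (ha : 1 ≤ a) (hb : 1 ≤ b) (hab : a ≠ b) {x : Fin d → ℝ}
    (hxa : x ∈ S d a) (hxb : x ∈ S d b) : False := by
  rcases lt_or_gt_of_ne hab with h | h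
  · exact S_disjoint_lt ha h hxa hxb
  · exact S_disjoint_lt hb h hxb hxa

theorem atom_nonempty_iff_codeword (n k : ℕ) (σs : Fin k → Finset (Fin n))
    (hne : ∀ i, (σs i).Nonempty) (hinj : Function.Injective σs)
    (U : Fin n → Set (Fin (k - 1) → ℝ))
    (hU : ∀ j, U j = ⋃ i, ⋃ (_ : j ∈ σs i), S (k - 1) ((i : ℕ) + 1))
    (σ : Finset (Fin n)) (hσ : σ.Nonempty) :
    ((⋂ j ∈ σ, U j) \ ⋃ l ∈ σᶜ, U l).Nonempty ↔ ∃ i, σ = σs i := by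
  constructor
  · rintro ⟨x, hxI, hxU⟩
    simp only [Set.mem_iInter] at hxI
    obtain ⟨j0, hj0⟩ := hσ
    have h0 := hxI j0 hj0
    rw [hU] at h0
    simp only [Set.mem_iUnion] at h0
    obtain ⟨i, hji, hxi⟩ := h0
    refine ⟨i, ?_⟩
    ext j
    constructor
    · intro hj
      have hxj := hxI j hj
      rw [hU] at hxj
      simp only [Set.mem_iUnion] at hxj
      obtain ⟨i', hji', hxi'⟩ := hxj
      have : i' = i := by
        by_contra h
        exact S_disjoint (by omega) (by omega)
          (by simpa using (Fin.val_ne_of_ne h)) hxi' hxi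
      exact this ▸ hji'
    · intro hj
      by_contra hjσ
      apply hxU
      simp only [Set.mem_iUnion]
      refine ⟨j, Finset.mem_compl.mpr hjσ, ?_⟩
      rw [hU]
      exact Set.mem_iUnion.mpr ⟨i, Set.mem_iUnion.mpr ⟨hj, hxi⟩⟩
  · rintro ⟨i, rfl⟩
    obtain ⟨x, hx⟩ := S_nonempty (d := k - 1) (i := (i : ℕ) + 1) (by omega)
      (by have := i.isLt; omega)
    refine ⟨x, ?_, ?_⟩
    · simp only [Set.mem_iInter]
      intro j hj
      rw [hU]
      exact Set.mem_iUnion.mpr ⟨i, Set.mem_iUnion.mpr ⟨hj, hx⟩⟩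
    · intro hmem
      simp only [Set.mem_iUnion] at hmem
      obtain ⟨l, hl, hxl⟩ := hmem
      rw [hU] at hxl
      simp only [Set.mem_iUnion] at hxl
      obtain ⟨i', hli', hxi'⟩ := hxl
      have : i' = i := by
        by_contra h
        exact S_disjoint (by omega) (by omega)
          (by simpa using (Fin.val_ne_of_ne h)) hxi' hx
      exact (Finset.mem_compl.mp hl) (this ▸ hli')
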